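/- If φ : ℕ₊ → ℝ satisfies φ(nm) = φ(n) + φ(m) for all positive integers n, m, and lim_{n→∞} (φ(n+1) − φ(n)) = 0, then there exists a constant c ∈ ℝ such that φ(n) = c ln(n) for all positive integers n. -/

import Mathlib

open scoped BigOperators Classical
open Filter Topology Real

/-- `p` is a probability measure on the finite set `X`. -/
def IsProb {X : Type} [Fintype X] (p : X → ℝ) : Prop :=
  (∀ i, 0 ≤ p i) ∧ ∑ i, p i = 1

/-- `p` is a (nonnegative) measure on the finite set `X`. -/
def IsMeas {X : Type} [Fintype X] (p : X → ℝ) : Prop :=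
  ∀ i, 0 ≤ p i

/-- `f` is a measure-preserving function from `(X, p)` to `(Y, q)`. -/
def IsMP {X Y : Type} [Fintype X] [Fintype Y] (p : X → ℝ) (q : Y → ℝ) (f : X → Y) : Prop :=
  ∀ j : Y, q j = ∑ i, if f i = j then p i else 0

/-- Shannon entropy (with the convention `0 * log 0 = 0`, automatic since `Real.log 0 = 0`). -/
noncomputable def shannon {X : Type} [Fintype X] (p : X → ℝ) : ℝ :=
  -∑ i, p i * Real.log (p i)

/-- The convex combination `λ p ⊕ (1 - λ) q` on the disjoint union. -/
noncomputable def cvx (lam : ℝ) {X Y : Type} (p : X → ℝ) (q : Y → ℝ) : X ⊕ Y → ℝ :=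
  Sum.elim (fun i => lam * p i) (fun j => (1 - lam) * q j)

/-- The direct sum `p ⊕ q` on the disjoint union. -/
def dsum {X Y : Type} (p : X → ℝ) (q : Y → ℝ) : X ⊕ Y → ℝ :=
  Sum.elim p q

/-- Extended Shannon entropy of a measure on a finite set. -/
noncomputable def shannonExt {X : Type} [Fintype X] (p : X → ℝ) : ℝ :=
  if (∑ i, p i) = 0 then 0 else (∑ i, p i) * shannon (fun i => p i / ∑ j, p j)

/-- Tsallis entropy of order `α` of a probability measure. -/
noncomputable def tsallis (α : ℝ) {X : Type} [Fintype X] (p : X → ℝ) : ℝ :=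
  if α = 1 then shannon p else (1 / (α - 1)) * (1 - ∑ i, p i ^ α)

/-- Extended Tsallis entropy of order `α` of a measure on a finite set. -/
noncomputable def tsallisExt (α : ℝ) {X : Type} [Fintype X] (p : X → ℝ) : ℝ :=
  if (∑ i, p i) = 0 then 0 else (∑ i, p i) ^ α * tsallis α (fun i => p i / ∑ j, p j)

set_option maxHeartbeats 1600000 in
/-- A multiplicative-to-additive function on positive integers whose successive
differences tend to zero is a multiple of the natural logarithm. -/
theorem stmt11 (φ : ℕ+ → ℝ)
    (hmul : ∀ n m : ℕ+, φ (n * m) = φ n + φ m)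
    (hlim : Tendsto (fun n : ℕ+ => φ (n + 1) - φ n) atTop (𝓝 0)) :
    ∃ c : ℝ, ∀ n : ℕ+, φ n = c * Real.log (n : ℕ) := by
  classical
  have hlog2 : (0:ℝ) < Real.log 2 := Real.log_pos (by norm_num)
  set c : ℝ := φ 2 / Real.log 2 with hc
  have hc2 : c * Real.log 2 = φ 2 := div_mul_cancel₀ _ hlog2.ne'
  have φ1 : φ 1 = 0 := by have h := hmul 1 1; simp at h; linarith
  set f : ℕ → ℝ := fun m => φ m.toPNat' with hfdef
  have hfcoe : ∀ n : ℕ+, f (n : ℕ) = φ n := by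
    intro n
    simp only [hfdef]
    congr 1
    apply PNat.coe_injective
    simp [Nat.toPNat'_coe, n.pos]
  have hfmul : ∀ a b : ℕ, 1 ≤ a → 1 ≤ b → f (a * b) = f a + f b := by
    intro a b ha hb
    have ha' : 0 < a := ha
    have hb' : 0 < b := hb
    have h : (a * b).toPNat' = a.toPNat' * b.toPNat' := by
      apply PNat.coe_injective
      simp [Nat.toPNat'_coe, ha', hb', Nat.mul_pos ha' hb']
    simp only [hfdef, h, hmul]
  have hfsucc : ∀ m : ℕ, 1 ≤ m → f (m + 1) = φ (m.toPNat' + 1) := by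
    intro m hm
    have hm' : 0 < m := hm
    simp only [hfdef]
    congr 1
    apply PNat.coe_injective
    simp [Nat.toPNat'_coe, hm', PNat.add_coe]
  have key : ∀ ε : ℝ, 0 < ε → ∃ D : ℝ, 0 ≤ D ∧
      ∀ m : ℕ, 1 ≤ m → |f m - c * Real.log m| ≤ ε * Real.log m + D := by
    intro ε hε
    set ε₀ : ℝ := ε * Real.log 2 / 2 with hε₀def
    have hε₀ : 0 < ε₀ := by positivity
    obtain ⟨Np, hNp⟩ := (Metric.tendsto_atTop.mp hlim) ε₀ hε₀
    set N₁ : ℕ := (Np : ℕ) with hN₁def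
    have hN₁f : ∀ m : ℕ, N₁ ≤ m → |f (m + 1) - f m| ≤ ε₀ := by
      intro m hm
      have hm1 : 1 ≤ m := le_trans Np.pos hm
      have h1 : Np ≤ m.toPNat' := by
        rw [← PNat.coe_le_coe]
        simpa [Nat.toPNat'_coe, (show 0 < m from hm1)] using hm
      have h2 := hNp _ h1
      rw [Real.dist_eq, sub_zero] at h2
      rw [hfsucc m hm1]
      exact le_of_lt h2
    obtain ⟨N₂, hN₂⟩ := exists_nat_ge (|c| / ε₀)
    have hN₂' : |c| ≤ ε₀ * N₂ := by
      rw [div_le_iff₀ hε₀] at hN₂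
      linarith
    set N : ℕ := max (max N₁ N₂) 1 with hNdef
    have hN1 : 1 ≤ N := le_max_right _ _
    have hNN₁ : N₁ ≤ N := le_trans (le_max_left _ _) (le_max_left _ _)
    have hNN₂ : N₂ ≤ N := le_trans (le_max_right _ _) (le_max_left _ _)
    have hne : (Finset.Icc 1 (2 * N)).Nonempty := ⟨1, Finset.mem_Icc.mpr ⟨le_refl _, by omega⟩⟩
    set D : ℝ := (Finset.Icc 1 (2 * N)).sup' hne (fun m => |f m - c * Real.log m|) with hDdef
    have hD : ∀ m ∈ Finset.Icc 1 (2 * N), |f m - c * Real.log m| ≤ D :=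
      fun m hm => Finset.le_sup' (fun m => |f m - c * Real.log m|) hm
    have hD0 : 0 ≤ D := le_trans (abs_nonneg _) (hD 1 (Finset.mem_Icc.mpr ⟨le_refl _, by omega⟩))
    refine ⟨D, hD0, ?_⟩
    intro m
    induction m using Nat.strong_induction_on with
    | _ m ih =>
      intro hm
      have hlogm : 0 ≤ Real.log m := Real.log_nonneg (by exact_mod_cast hm)
      by_cases hsmall : m ≤ 2 * N
      · have h1 := hD m (Finset.mem_Icc.mpr ⟨hm, hsmall⟩)
        nlinarith [mul_nonneg hε.le hlogm]
      · push_neg at hsmall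
        set q : ℕ := m / 2 with hqdef
        have hq1 : 1 ≤ q := by omega
        have hqN : N ≤ q := by omega
        have hqm : q < m := by omega
        have h2qle : 2 * q ≤ m := by omega
        have hle2q1 : m ≤ 2 * q + 1 := by omega
        have ihq := ih q hqm hq1
        have hq0 : (0:ℝ) < (q:ℝ) := by exact_mod_cast hq1
        have h2q0 : (0:ℝ) < ((2 * q : ℕ):ℝ) := by
          have : 0 < 2 * q := by omega
          exact_mod_cast this
        have stepA : |f m - f (2 * q)| ≤ ε₀ := by
          rcases (by omega : m = 2 * q ∨ m = 2 * q + 1) with h | h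
          · rw [h]; simp [hε₀.le]
          · rw [h]; exact hN₁f (2 * q) (by omega)
        have hf2 : f 2 = φ 2 := by
          have := hfcoe 2
          simpa using this
        have stepB : f (2 * q) = c * Real.log 2 + f q := by
          rw [hfmul 2 q (by norm_num) hq1, hf2, hc2]
        have hlog2q : Real.log ((2 * q : ℕ):ℝ) = Real.log 2 + Real.log q := by
          push_cast
          rw [Real.log_mul (by norm_num) (ne_of_gt hq0)]
        have hlogle : Real.log ((2 * q : ℕ):ℝ) ≤ Real.log m := by
          apply Real.log_le_log h2q0
          exact_mod_cast h2qle
        have hlogup : Real.log (m:ℝ) ≤ Real.log ((2 * q : ℕ):ℝ) + 1 / (2 * (q:ℝ)) := by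
          have h1 : Real.log (m:ℝ) ≤ Real.log ((2 * q + 1 : ℕ):ℝ) := by
            apply Real.log_le_log (by exact_mod_cast (show 0 < m by omega))
            exact_mod_cast hle2q1
          have h2 : Real.log ((2 * q + 1 : ℕ):ℝ) - Real.log ((2 * q : ℕ):ℝ) ≤ 1 / (2 * (q:ℝ)) := by
            have hx : (0:ℝ) < ((2 * q + 1 : ℕ):ℝ) / ((2 * q : ℕ):ℝ) := by positivity
            have h3 := Real.log_le_sub_one_of_pos hx
            rw [Real.log_div (by positivity) (ne_of_gt h2q0)] at h3
            have : ((2 * q + 1 : ℕ):ℝ) / ((2 * q : ℕ):ℝ) - 1 = 1 / (2 * (q:ℝ)) := by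
              push_cast
              field_simp
              ring
            linarith [h3, this.symm ▸ h3]
          linarith
        have hcb : |c| ≤ ε₀ * (2 * (q:ℝ)) := by
          have hcast : (N₂:ℝ) ≤ 2 * (q:ℝ) := by
            have : N₂ ≤ 2 * q := by omega
            exact_mod_cast this
          nlinarith
        have stepF : |c * Real.log (m:ℝ) - c * Real.log ((2 * q : ℕ):ℝ)| ≤ ε₀ := by
          rw [← mul_sub, abs_mul, abs_of_nonneg (sub_nonneg.mpr hlogle)]
          have hsub : Real.log (m:ℝ) - Real.log ((2 * q : ℕ):ℝ) ≤ 1 / (2 * (q:ℝ)) := by linarith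
          have habs : (0:ℝ) ≤ |c| := abs_nonneg c
          have hq2 : (0:ℝ) < 2 * (q:ℝ) := by positivity
          calc |c| * (Real.log (m:ℝ) - Real.log ((2 * q : ℕ):ℝ))
              ≤ |c| * (1 / (2 * (q:ℝ))) := by
                apply mul_le_mul_of_nonneg_left hsub habs
            _ ≤ ε₀ := by
                rw [mul_one_div, div_le_iff₀ hq2]
                nlinarith
        have tri : |f m - c * Real.log (m:ℝ)| ≤ |f m - f (2 * q)|
            + |f (2 * q) - c * Real.log ((2 * q : ℕ):ℝ)|
            + |c * Real.log ((2 * q : ℕ):ℝ) - c * Real.log (m:ℝ)| := by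
          have t1 := abs_sub_le (f m) (f (2 * q)) (c * Real.log (m:ℝ))
          have t2 := abs_sub_le (f (2 * q)) (c * Real.log ((2 * q : ℕ):ℝ)) (c * Real.log (m:ℝ))
          linarith
        have heq : f (2 * q) - c * Real.log ((2 * q : ℕ):ℝ) = f q - c * Real.log q := by
          rw [stepB, hlog2q]; ring
        rw [heq, abs_sub_comm (c * Real.log ((2 * q : ℕ):ℝ))] at tri
        have hεnn : ε * Real.log ((2 * q : ℕ):ℝ) ≤ ε * Real.log (m:ℝ) :=
          mul_le_mul_of_nonneg_left hlogle hε.le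
        have e1 : ε * Real.log ((2 * q : ℕ):ℝ) = ε * Real.log 2 + ε * Real.log q := by
          rw [hlog2q]; ring
        linarith
  have hpow : ∀ (n : ℕ+) (k : ℕ), φ (n ^ k) = k * φ n := by
    intro n k
    induction k with
    | zero => simpa using φ1
    | succ k ihk =>
      rw [pow_succ, hmul, ihk]
      push_cast
      ring
  refine ⟨c, ?_⟩
  intro n
  have hlogn : 0 ≤ Real.log (n:ℕ) := Real.log_nonneg (by exact_mod_cast n.one_le)
  have habs : ∀ δ : ℝ, 0 < δ → |φ n - c * Real.log (n:ℕ)| ≤ δ := by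
    intro δ hδ
    set ε : ℝ := δ / (2 * (Real.log (n:ℕ) + 1)) with hεdef
    have hε : 0 < ε := by positivity
    obtain ⟨D, hD0, hkey⟩ := key ε hε
    obtain ⟨k, hk⟩ := exists_nat_gt (D / (δ / 2))
    have hdd : (0:ℝ) ≤ D / (δ / 2) := by positivity
    have hk1 : 1 ≤ k := by
      have h : (0:ℝ) < (k:ℕ) := lt_of_le_of_lt hdd hk
      have h' : 0 < k := by exact_mod_cast h
      omega
    have hfn : f ((n:ℕ) ^ k) = (k:ℝ) * φ n := by
      have h : ((n : ℕ) ^ k) = ((n ^ k : ℕ+) : ℕ) := by rw [PNat.pow_coe]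
      rw [h, hfcoe, hpow]
    have h1 := hkey ((n:ℕ) ^ k) (Nat.one_le_pow _ _ n.pos)
    rw [hfn] at h1
    have hcast : Real.log ((((n:ℕ) ^ k : ℕ)) : ℝ) = (k:ℝ) * Real.log (n:ℕ) := by
      push_cast
      rw [Real.log_pow]
    rw [hcast] at h1
    have hk0 : (0:ℝ) < (k:ℝ) := by exact_mod_cast hk1
    have h2 : (k:ℝ) * |φ n - c * Real.log (n:ℕ)| ≤ ε * ((k:ℝ) * Real.log (n:ℕ)) + D := by
      calc (k:ℝ) * |φ n - c * Real.log (n:ℕ)|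
          = |(k:ℝ) * (φ n - c * Real.log (n:ℕ))| := by
            rw [abs_mul, abs_of_nonneg hk0.le]
        _ = |(k:ℝ) * φ n - c * ((k:ℝ) * Real.log (n:ℕ))| := by ring_nf
        _ ≤ _ := h1
    have hDk : D ≤ (δ / 2) * k := by
      rw [div_lt_iff₀ (by positivity : (0:ℝ) < δ / 2)] at hk
      linarith
    have hεl : ε * Real.log (n:ℕ) ≤ δ / 2 := by
      have hpos : (0:ℝ) < 2 * (Real.log (n:ℕ) + 1) := by linarith
      have hhalf : Real.log (n:ℕ) / (2 * (Real.log (n:ℕ) + 1)) ≤ 1 / 2 := by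
        rw [div_le_iff₀ hpos]
        linarith
      calc ε * Real.log (n:ℕ)
          = δ * (Real.log (n:ℕ) / (2 * (Real.log (n:ℕ) + 1))) := by
            rw [hεdef]; ring
        _ ≤ δ * (1 / 2) := mul_le_mul_of_nonneg_left hhalf hδ.le
        _ = δ / 2 := by ring
    have h4 : (ε * Real.log (n:ℕ)) * k ≤ (δ / 2) * k :=
      mul_le_mul_of_nonneg_right hεl hk0.le
    have e : ε * ((k:ℝ) * Real.log (n:ℕ)) = (ε * Real.log (n:ℕ)) * k := by ring
    have e2 : (δ / 2) * k + (δ / 2) * k = (k:ℝ) * δ := by ring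
    have h5 : (k:ℝ) * |φ n - c * Real.log (n:ℕ)| ≤ (k:ℝ) * δ := by linarith
    exact le_of_mul_le_mul_left h5 hk0
  have h0 : |φ n - c * Real.log (n:ℕ)| ≤ 0 := by
    apply le_of_forall_pos_le_add
    intro δ hδ
    simpa using habs δ hδ
  have h1 : φ n - c * Real.log (n:ℕ) = 0 :=
    abs_eq_zero.mp (le_antisymm h0 (abs_nonneg _))
  linarith
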